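/- Let $N, M, p \ge 1$. Let $G_{11} \in \mathbb{R}^{N \times N}$, $G_{12} \in \mathbb{R}^{N \times M}$, $G_{21} \in \mathbb{R}^{M \times N}$, $K_s \in \mathbb{R}^{N \times p}$, $K_u \in \mathbb{R}^{M \times p}$, and let $G_{22} \in \mathbb{R}^{M \times M}$ be invertible; set $\tilde{G} = G_{11} - G_{12} G_{22}^{-1} G_{21}$. Let $\gamma \ge 0$, $\varepsilon > 0$, and let $P \in \mathbb{R}^{N \times N}$ be symmetric positive definite satisfying $\tilde{G}^\top P + P \tilde{G} + \gamma^2 P P + (1 + \varepsilon)\mathbf{I}_N = 0$. Suppose $e_s : [0,\infty) \to \mathbb{R}^N$ is differentiable and $e_u : [0,\infty) \to \mathbb{R}^M$, $\varphi_s : [0,\infty) \to \mathbb{R}^N$, $\varphi_u : [0,\infty) \to \mathbb{R}^M$, $\eta : [0,\infty) \to \mathbb{R}^p$ satisfy, for all $t \ge 0$: $\dot{e}_s(t) = G_{11} e_s(t) + G_{12} e_u(t) + \varphi_s(t) - K_s \eta(t)$, $0 = G_{21} e_s(t) + G_{22} e_u(t) + \varphi_u(t) - K_u \eta(t)$, $\big\|\varphi_s(t)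 - G_{12} G_{22}^{-1} \varphi_u(t) + (G_{12} G_{22}^{-1} K_u - K_s)\eta(t)\big\| \le \gamma \|e_s(t)\|$, and there exist constants $c_1, c_2 \ge 0$ with $\|\varphi_u(t)\| \le c_1 \|e_s(t)\|$ and $\|\eta(t)\| \le c_2 \|e_s(t)\|$. Then both $e_s(t) \to 0$ and $e_u(t) \to 0$ as $t \to \infty$. -/

import Mathlib

set_option maxHeartbeats 1000000
open Matrix RealInnerProductSpace Filter

lemma toEL_mul {a b c : ℕ} (A : Matrix (Fin a) (Fin b) ℝ) (B : Matrix (Fin b) (Fin c) ℝ)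
    (x : EuclideanSpace ℝ (Fin c)) :
    toEuclideanLin (A*B) x = toEuclideanLin A (toEuclideanLin B x) := by
  simp [toEuclideanLin_apply, mulVec_mulVec]

lemma toEL_one {a : ℕ} (x : EuclideanSpace ℝ (Fin a)) :
    toEuclideanLin (1 : Matrix (Fin a) (Fin a) ℝ) x = x := by
  simp [toEuclideanLin_apply]

lemma real_tr_eq_ct {a b : ℕ} (A : Matrix (Fin a) (Fin b) ℝ) : Aᵀ = Aᴴ := by
  ext i j; simp [conjTranspose, Matrix.map_apply]

lemma inner_toEL {a b : ℕ} (A : Matrix (Fin a) (Fin b) ℝ) (x : EuclideanSpace ℝ (Fin b))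
    (y : EuclideanSpace ℝ (Fin a)) :
    ⟪toEuclideanLin A x, y⟫ = ⟪x, toEuclideanLin Aᵀ y⟫ := by
  rw [real_tr_eq_ct, Matrix.toEuclideanLin_conjTranspose_eq_adjoint,
    LinearMap.adjoint_inner_right]

lemma inner_posdef {a : ℕ} {P : Matrix (Fin a) (Fin a) ℝ} (hP : P.PosDef)
    (x : EuclideanSpace ℝ (Fin a)) (hx : x ≠ 0) :
    0 < ⟪toEuclideanLin P x, x⟫ := by
  have := hP.dotProduct_mulVec_pos (x := WithLp.equiv 2 _ x) (by simpa using hx)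
  simpa [toEuclideanLin_apply, PiLp.inner_apply, dotProduct, mul_comm,
    real_inner_comm] using this

lemma posdef_lower {a : ℕ} (ha : 1 ≤ a) {P : Matrix (Fin a) (Fin a) ℝ} (hP : P.PosDef) :
    ∃ m > 0, ∀ x : EuclideanSpace ℝ (Fin a), m * ‖x‖^2 ≤ ⟪toEuclideanLin P x, x⟫ := by
  haveI : Nonempty (Fin a) := ⟨⟨0, ha⟩⟩
  set L := LinearMap.toContinuousLinearMap (toEuclideanLin P) with hL
  have hLapp : ∀ x, L x = toEuclideanLin P x := fun x => rfl
  have hcont : Continuous fun x : EuclideanSpace ℝ (Fin a) => ⟪toEuclideanLin P x, x⟫ := by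
    have := Continuous.inner (𝕜 := ℝ) L.continuous continuous_id
    simpa [hLapp] using this
  have hsph : IsCompact (Metric.sphere (0 : EuclideanSpace ℝ (Fin a)) 1) :=
    isCompact_sphere _ _
  have hne : (Metric.sphere (0 : EuclideanSpace ℝ (Fin a)) 1).Nonempty :=
    NormedSpace.sphere_nonempty.mpr zero_le_one
  obtain ⟨x0, hx0, hmin⟩ := hsph.exists_isMinOn hne hcont.continuousOn
  have hx0n : ‖x0‖ = 1 := by simpa using hx0
  have hx0ne : x0 ≠ 0 := by intro h; rw [h] at hx0n; simp at hx0n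
  refine ⟨⟪toEuclideanLin P x0, x0⟫, inner_posdef hP x0 hx0ne, fun x => ?_⟩
  rcases eq_or_ne x 0 with rfl | hx
  · simp
  · have hxn : ‖x‖ ≠ 0 := norm_ne_zero_iff.mpr hx
    set u : EuclideanSpace ℝ (Fin a) := ‖x‖⁻¹ • x with hu
    have hun : u ∈ Metric.sphere (0 : EuclideanSpace ℝ (Fin a)) 1 := by
      simp [hu, norm_smul, abs_of_nonneg (inv_nonneg.mpr (norm_nonneg x)),
        inv_mul_cancel₀ hxn]
    have hq : ⟪toEuclideanLin P u, u⟫ = ‖x‖⁻¹^2 * ⟪toEuclideanLin P x, x⟫ := by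
      simp [hu, inner_smul_left, inner_smul_right, _root_.map_smul]
      ring
    have := hmin hun
    simp only [Set.mem_setOf_eq] at this
    have h2 : ⟪toEuclideanLin P x0, x0⟫ ≤ ‖x‖⁻¹^2 * ⟪toEuclideanLin P x, x⟫ := by
      rw [← hq]; exact this
    have h3 : ⟪toEuclideanLin P x0, x0⟫ * ‖x‖^2 ≤ ⟪toEuclideanLin P x, x⟫ := by
      have hxx : (0:ℝ) < ‖x‖^2 := by positivity
      calc ⟪toEuclideanLin P x0, x0⟫ * ‖x‖^2
          ≤ (‖x‖⁻¹^2 * ⟪toEuclideanLin P x, x⟫) * ‖x‖^2 := by nlinarith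
        _ = ⟪toEuclideanLin P x, x⟫ := by field_simp
    linarith

lemma posdef_upper {a : ℕ} (P : Matrix (Fin a) (Fin a) ℝ) :
    ∃ C > 0, ∀ x : EuclideanSpace ℝ (Fin a), ⟪toEuclideanLin P x, x⟫ ≤ C * ‖x‖^2 := by
  set L := LinearMap.toContinuousLinearMap (toEuclideanLin P) with hL
  refine ⟨‖L‖ + 1, by positivity, fun x => ?_⟩
  have h1 : ⟪toEuclideanLin P x, x⟫ ≤ ‖toEuclideanLin P x‖ * ‖x‖ :=
    real_inner_le_norm _ _
  have h2 : ‖toEuclideanLin P x‖ ≤ ‖L‖ * ‖x‖ := L.le_opNorm x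
  nlinarith [norm_nonneg x, norm_nonneg (toEuclideanLin P x), norm_nonneg L]

lemma toEL_norm_le {a b : ℕ} (A : Matrix (Fin a) (Fin b) ℝ) :
    ∃ C ≥ 0, ∀ x : EuclideanSpace ℝ (Fin b), ‖toEuclideanLin A x‖ ≤ C * ‖x‖ := by
  exact ⟨‖LinearMap.toContinuousLinearMap (toEuclideanLin A)‖, norm_nonneg _,
    fun x => (LinearMap.toContinuousLinearMap (toEuclideanLin A)).le_opNorm x⟩

theorem stmt11 (N M p : ℕ) (hN : 1 ≤ N) (hM : 1 ≤ M) (hp : 1 ≤ p)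
    (G11 : Matrix (Fin N) (Fin N) ℝ) (G12 : Matrix (Fin N) (Fin M) ℝ)
    (G21 : Matrix (Fin M) (Fin N) ℝ) (G22 : Matrix (Fin M) (Fin M) ℝ)
    (hG22 : IsUnit G22.det)
    (Ks : Matrix (Fin N) (Fin p) ℝ) (Ku : Matrix (Fin M) (Fin p) ℝ)
    (Gt : Matrix (Fin N) (Fin N) ℝ) (hGt : Gt = G11 - G12 * G22⁻¹ * G21)
    (γ : ℝ) (hγ : 0 ≤ γ) (ε : ℝ) (hε : 0 < ε)
    (P : Matrix (Fin N) (Fin N) ℝ) (hP : P.PosDef)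
    (hric : Gtᵀ * P + P * Gt + γ ^ 2 • (P * P)
        + (1 + ε) • (1 : Matrix (Fin N) (Fin N) ℝ) = 0)
    (es : ℝ → EuclideanSpace ℝ (Fin N)) (eu : ℝ → EuclideanSpace ℝ (Fin M))
    (phis : ℝ → EuclideanSpace ℝ (Fin N)) (phiu : ℝ → EuclideanSpace ℝ (Fin M))
    (eta : ℝ → EuclideanSpace ℝ (Fin p))
    (hdiff : ∀ t : ℝ, 0 ≤ t → HasDerivAt es
      (Matrix.toEuclideanLin G11 (es t) + Matrix.toEuclideanLin G12 (eu t)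
        + phis t - Matrix.toEuclideanLin Ks (eta t)) t)
    (halg : ∀ t : ℝ, 0 ≤ t →
      (0 : EuclideanSpace ℝ (Fin M))
        = Matrix.toEuclideanLin G21 (es t) + Matrix.toEuclideanLin G22 (eu t)
          + phiu t - Matrix.toEuclideanLin Ku (eta t))
    (hLip : ∀ t : ℝ, 0 ≤ t →
      ‖phis t - Matrix.toEuclideanLin (G12 * G22⁻¹) (phiu t)
        + Matrix.toEuclideanLin (G12 * G22⁻¹ * Ku - Ks) (eta t)‖ ≤ γ * ‖es t‖)
    (c1 c2 : ℝ) (hc1 : 0 ≤ c1) (hc2 : 0 ≤ c2)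
    (hphiu : ∀ t : ℝ, 0 ≤ t → ‖phiu t‖ ≤ c1 * ‖es t‖)
    (heta : ∀ t : ℝ, 0 ≤ t → ‖eta t‖ ≤ c2 * ‖es t‖) :
    Filter.Tendsto es Filter.atTop (nhds 0) ∧
      Filter.Tendsto eu Filter.atTop (nhds 0) := by
  classical
  -- notation
  set Q : Matrix (Fin N) (Fin M) ℝ := G12 * G22⁻¹ with hQ
  set Phi : ℝ → EuclideanSpace ℝ (Fin N) := fun t =>
    phis t - toEuclideanLin Q (phiu t) + toEuclideanLin (Q * Ku - Ks) (eta t) with hPhi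
  have hPhiLip : ∀ t, 0 ≤ t → ‖Phi t‖ ≤ γ * ‖es t‖ := fun t ht => hLip t ht
  -- solve the algebraic equation for eu
  have heu : ∀ t, 0 ≤ t → eu t
      = -(toEuclideanLin G22⁻¹ (toEuclideanLin G21 (es t) + phiu t
          - toEuclideanLin Ku (eta t))) := by
    intro t ht
    have h := halg t ht
    have h2 : toEuclideanLin G22 (eu t)
        + (toEuclideanLin G21 (es t) + phiu t - toEuclideanLin Ku (eta t)) = 0 := by
      rw [h]; abel
    have h3 : toEuclideanLin G22 (eu t)
        = -(toEuclideanLin G21 (es t) + phiu t - toEuclideanLin Ku (eta t)) :=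
      eq_neg_of_add_eq_zero_left h2
    have h4 : eu t = toEuclideanLin G22⁻¹ (toEuclideanLin G22 (eu t)) := by
      rw [← toEL_mul, Matrix.nonsing_inv_mul G22 hG22, toEL_one]
    rw [h4, h3, map_neg]
  -- reduced ODE
  have hdiff' : ∀ t, 0 ≤ t →
      HasDerivAt es (toEuclideanLin Gt (es t) + Phi t) t := by
    intro t ht
    have key : toEuclideanLin Gt (es t) + Phi t
        = toEuclideanLin G11 (es t) + toEuclideanLin G12 (eu t)
          + phis t - toEuclideanLin Ks (eta t) := by
      rw [heu t ht, hGt, hPhi]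
      simp only [hQ, map_sub, LinearMap.sub_apply, map_add, map_neg, toEL_mul]
      abel
    rw [key]
    exact hdiff t ht
  -- quadratic Lyapunov function
  obtain ⟨m, hm, hlow⟩ := posdef_lower hN hP
  obtain ⟨Cu, hCu, hupp⟩ := posdef_upper P
  set V : ℝ → ℝ := fun t => ⟪toEuclideanLin P (es t), es t⟫ with hV
  set c : ℝ := ε / Cu with hc
  have hcpos : 0 < c := div_pos hε hCu
  have hPT : Pᵀ = P := by rw [real_tr_eq_ct]; exact hP.1
  have hVnn : ∀ t, 0 ≤ V t := by
    intro t
    have := hlow (es t)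
    have : (0:ℝ) ≤ m * ‖es t‖^2 := by positivity
    linarith [hlow (es t)]
  -- derivative bound for V
  have hVd : ∀ t, 0 ≤ t → ∃ D, HasDerivAt V D t ∧ D ≤ -(c * V t) := by
    intro t ht
    have hes : HasDerivAt es (toEuclideanLin Gt (es t) + Phi t) t := hdiff' t ht
    set e := es t with he
    set e' := toEuclideanLin Gt e + Phi t with he'
    have hPes : HasDerivAt (fun s => toEuclideanLin P (es s)) (toEuclideanLin P e') t := by
      have := ((LinearMap.toContinuousLinearMap
        (toEuclideanLin P)).hasFDerivAt (x := es t)).comp_hasDerivAt t hes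
      exact this
    have hVt : HasDerivAt V (⟪toEuclideanLin P e, e'⟫ + ⟪toEuclideanLin P e', e⟫) t :=
      hPes.inner ℝ hes
    refine ⟨_, hVt, ?_⟩
    have hsymm : ⟪toEuclideanLin P e', e⟫ = ⟪toEuclideanLin P e, e'⟫ := by
      rw [inner_toEL, hPT, real_inner_comm]
    -- matrix quadratic identity
    have h1 : ⟪toEuclideanLin (Gtᵀ * P) e, e⟫ = ⟪toEuclideanLin P e, toEuclideanLin Gt e⟫ := by
      rw [toEL_mul, inner_toEL Gtᵀ, transpose_transpose, real_inner_comm]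
    have h2 : ⟪toEuclideanLin (P * Gt) e, e⟫ = ⟪toEuclideanLin P e, toEuclideanLin Gt e⟫ := by
      rw [toEL_mul, inner_toEL P, hPT, real_inner_comm]
    have hPP : ⟪toEuclideanLin (P * P) e, e⟫ = ‖toEuclideanLin P e‖^2 := by
      rw [toEL_mul, inner_toEL P, hPT, real_inner_self_eq_norm_sq]
    have hR : Gtᵀ * P + P * Gt
        = -(γ^2 • (P * P)) - (1+ε) • (1 : Matrix (Fin N) (Fin N) ℝ) := by
      have h0 : (Gtᵀ * P + P * Gt) + (γ^2 • (P * P)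
          + (1+ε) • (1 : Matrix (Fin N) (Fin N) ℝ)) = 0 := by
        rw [← hric]; abel
      have := eq_neg_of_add_eq_zero_left h0
      rw [this, neg_add]; abel
    have hquad : (2:ℝ) * ⟪toEuclideanLin P e, toEuclideanLin Gt e⟫
        = -(γ^2 * ‖toEuclideanLin P e‖^2) - (1+ε) * ‖e‖^2 := by
      have hsum : ⟪toEuclideanLin (Gtᵀ * P + P * Gt) e, e⟫
          = (2:ℝ) * ⟪toEuclideanLin P e, toEuclideanLin Gt e⟫ := by
        rw [map_add]
        simp only [LinearMap.add_apply, inner_add_left, h1, h2]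
        ring
      rw [← hsum, hR]
      simp only [map_sub, map_neg, _root_.map_smul, LinearMap.sub_apply,
        LinearMap.neg_apply, LinearMap.smul_apply, inner_sub_left,
        inner_neg_left, inner_smul_left, toEL_one, RCLike.star_def]
      rw [hPP, real_inner_self_eq_norm_sq]
      simp
    -- nonlinearity bound
    have hin : ⟪toEuclideanLin P e, Phi t⟫ ≤ ‖toEuclideanLin P e‖ * (γ * ‖e‖) := by
      calc ⟪toEuclideanLin P e, Phi t⟫ ≤ ‖toEuclideanLin P e‖ * ‖Phi t‖ :=
            real_inner_le_norm _ _
        _ ≤ ‖toEuclideanLin P e‖ * (γ * ‖e‖) := by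
            exact mul_le_mul_of_nonneg_left (hPhiLip t ht) (norm_nonneg _)
    have hVle : V t ≤ Cu * ‖e‖^2 := hupp e
    have hcV : c * V t ≤ ε * ‖e‖^2 := by
      have : c * V t ≤ c * (Cu * ‖e‖^2) :=
        mul_le_mul_of_nonneg_left hVle (le_of_lt hcpos)
      have hce : c * Cu = ε := by rw [hc]; exact div_mul_cancel₀ ε (ne_of_gt hCu)
      nlinarith
    have hexp : ⟪toEuclideanLin P e, e'⟫ + ⟪toEuclideanLin P e', e⟫
        = (2:ℝ) * ⟪toEuclideanLin P e, toEuclideanLin Gt e⟫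
          + 2 * ⟪toEuclideanLin P e, Phi t⟫ := by
      rw [hsymm, he', inner_add_right]; ring
    rw [hexp, hquad]
    nlinarith [sq_nonneg (γ * ‖toEuclideanLin P e‖ - ‖e‖), norm_nonneg e,
      norm_nonneg (toEuclideanLin P e)]
  -- Gronwall via antitonicity of V t * exp (c t)
  set W : ℝ → ℝ := fun t => V t * Real.exp (c * t) with hW
  have hWd : ∀ t, 0 ≤ t → ∃ D', HasDerivAt W D' t ∧ D' ≤ 0 := by
    intro t ht
    obtain ⟨D, hD, hDle⟩ := hVd t ht
    have hexp : HasDerivAt (fun s => Real.exp (c * s)) (Real.exp (c * t) * c) t := by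
      have : HasDerivAt (fun s : ℝ => c * s) (c * 1) t := (hasDerivAt_id t).const_mul c
      simpa using this.exp
    refine ⟨_, hD.mul hexp, ?_⟩
    have h1 : D * Real.exp (c * t) + V t * (Real.exp (c * t) * c)
        = (D + c * V t) * Real.exp (c * t) := by ring
    rw [h1]
    have := Real.exp_pos (c * t)
    nlinarith
  have hanti : AntitoneOn W (Set.Ici (0:ℝ)) := by
    apply antitoneOn_of_deriv_nonpos (convex_Ici 0)
    · intro t ht
      obtain ⟨D', hD', _⟩ := hWd t ht
      exact hD'.continuousAt.continuousWithinAt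
    · intro t ht
      rw [interior_Ici] at ht
      obtain ⟨D', hD', _⟩ := hWd t (le_of_lt ht)
      exact hD'.differentiableAt.differentiableWithinAt
    · intro t ht
      rw [interior_Ici] at ht
      obtain ⟨D', hD', hle⟩ := hWd t (le_of_lt ht)
      rw [hD'.deriv]; exact hle
  have hVbound : ∀ t, 0 ≤ t → V t ≤ V 0 * Real.exp (-(c * t)) := by
    intro t ht
    have h := hanti Set.self_mem_Ici (Set.mem_Ici.mpr ht) ht
    have hW0 : W 0 = V 0 := by simp [hW]
    have hep := Real.exp_pos (c * t)
    have h' : V t * Real.exp (c * t) ≤ V 0 := by rw [← hW0]; exact h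
    have h'' : V t ≤ V 0 / Real.exp (c * t) := (le_div_iff₀ hep).mpr h'
    rw [Real.exp_neg, ← div_eq_mul_inv]
    exact h''
  -- convergence of es
  have hnorm2 : ∀ t, 0 ≤ t → ‖es t‖^2 ≤ (V 0 / m) * Real.exp (-(c * t)) := by
    intro t ht
    have h1 := hlow (es t)
    have h2 := hVbound t ht
    rw [div_mul_eq_mul_div, le_div_iff₀ hm]
    nlinarith
  have htendsb : Tendsto (fun t => (V 0 / m) * Real.exp (-(c * t))) atTop (nhds 0) := by
    have h1 : Tendsto (fun t : ℝ => c * t) atTop atTop :=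
      Tendsto.const_mul_atTop hcpos tendsto_id
    have h2 := Real.tendsto_exp_neg_atTop_nhds_zero.comp h1
    have h3 := h2.const_mul (V 0 / m)
    simpa [Function.comp] using h3
  have hsq : Tendsto (fun t => ‖es t‖^2) atTop (nhds 0) :=
    squeeze_zero' (Filter.Eventually.of_forall fun t => by positivity)
      ((eventually_ge_atTop 0).mono hnorm2) htendsb
  have hesn : Tendsto (fun t => ‖es t‖) atTop (nhds 0) := by
    have h := (Real.continuous_sqrt.tendsto 0).comp hsq
    rw [Real.sqrt_zero] at h
    have he : (Real.sqrt ∘ fun t => ‖es t‖^2) = fun t => ‖es t‖ := by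
      funext t; simp [Real.sqrt_sq (norm_nonneg (es t))]
    rwa [he] at h
  have hes0 : Tendsto es atTop (nhds 0) := tendsto_zero_iff_norm_tendsto_zero.mpr hesn
  refine ⟨hes0, ?_⟩
  -- convergence of eu
  obtain ⟨CA, hCA, hA⟩ := toEL_norm_le (G22⁻¹)
  obtain ⟨CB, hCB, hB⟩ := toEL_norm_le G21
  obtain ⟨CC, hCC, hC⟩ := toEL_norm_le Ku
  set C3 : ℝ := CA * (CB + c1 + CC * c2) with hC3
  have heub : ∀ t, 0 ≤ t → ‖eu t‖ ≤ C3 * ‖es t‖ := by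
    intro t ht
    rw [heu t ht, norm_neg]
    have hv : ‖toEuclideanLin G21 (es t) + phiu t - toEuclideanLin Ku (eta t)‖
        ≤ CB * ‖es t‖ + c1 * ‖es t‖ + CC * (c2 * ‖es t‖) := by
      calc ‖toEuclideanLin G21 (es t) + phiu t - toEuclideanLin Ku (eta t)‖
          ≤ ‖toEuclideanLin G21 (es t) + phiu t‖ + ‖toEuclideanLin Ku (eta t)‖ :=
            norm_sub_le _ _
        _ ≤ ‖toEuclideanLin G21 (es t)‖ + ‖phiu t‖ + ‖toEuclideanLin Ku (eta t)‖ := by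
            have := norm_add_le (toEuclideanLin G21 (es t)) (phiu t)
            linarith
        _ ≤ CB * ‖es t‖ + c1 * ‖es t‖ + CC * (c2 * ‖es t‖) := by
            have h1 := hB (es t)
            have h2 := hphiu t ht
            have h3 : ‖toEuclideanLin Ku (eta t)‖ ≤ CC * (c2 * ‖es t‖) := by
              calc ‖toEuclideanLin Ku (eta t)‖ ≤ CC * ‖eta t‖ := hC _
                _ ≤ CC * (c2 * ‖es t‖) :=
                    mul_le_mul_of_nonneg_left (heta t ht) hCC
            linarith
    calc ‖toEuclideanLin G22⁻¹ (toEuclideanLin G21 (es t) + phiu t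
            - toEuclideanLin Ku (eta t))‖
        ≤ CA * ‖toEuclideanLin G21 (es t) + phiu t - toEuclideanLin Ku (eta t)‖ := hA _
      _ ≤ CA * (CB * ‖es t‖ + c1 * ‖es t‖ + CC * (c2 * ‖es t‖)) :=
          mul_le_mul_of_nonneg_left hv hCA
      _ = C3 * ‖es t‖ := by rw [hC3]; ring
  apply tendsto_zero_iff_norm_tendsto_zero.mpr
  apply squeeze_zero' (Filter.Eventually.of_forall fun t => norm_nonneg _)
    ((eventually_ge_atTop 0).mono heub)
  have := hesn.const_mul C3
  simpa using this
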